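/- For fixed y with 0 < √λ·|y| < 1 appropriately, the function λ ↦ arctan(λ, y) = arctan(√λ y)/√λ (extended as y at λ = 0 and arctanh(√(-λ)y)/√(-λ) for λ < 0) is strictly decreasing in λ for y > 0; consequently |arctan(Ω, y)| > |y| when Ω < 0 and |arctan(Ω, y)| < |y| when Ω > 0. -/

import Mathlib

/-- The inverse hyperbolic tangent. -/
noncomputable def artanh (x : ℝ) : ℝ := (1/2) * Real.log ((1 + x) / (1 - x))

lemma hasDerivAt_artanh {x : ℝ} (h1 : -1 < x) (h2 : x < 1) :
    HasDerivAt artanh (1 / (1 - x ^ 2)) x := by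
  have hpos1 : 0 < 1 + x := by linarith
  have hpos2 : 0 < 1 - x := by linarith
  have hd1 : HasDerivAt (fun t : ℝ => Real.log (1 + t)) (1 / (1 + x)) x := by
    have := ((hasDerivAt_id x).const_add 1).log hpos1.ne'
    simpa using this
  have hd2 : HasDerivAt (fun t : ℝ => Real.log (1 - t)) (-1 / (1 - x)) x := by
    have := ((hasDerivAt_id x).const_sub 1).log hpos2.ne'
    simpa using this
  have hd : HasDerivAt (fun t : ℝ => (1/2) * (Real.log (1 + t) - Real.log (1 - t)))
      ((1/2) * (1 / (1 + x) - -1 / (1 - x))) x := ((hd1.sub hd2).const_mul _)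
  have hne : (1:ℝ) - x ^ 2 ≠ 0 := by nlinarith
  have heq : (1/2 : ℝ) * (1 / (1 + x) - -1 / (1 - x)) = 1 / (1 - x ^ 2) := by
    field_simp
    ring
  rw [heq] at hd
  apply hd.congr_of_eventuallyEq
  filter_upwards [isOpen_Ioo.mem_nhds (show x ∈ Set.Ioo (-1:ℝ) 1 from ⟨h1, h2⟩)] with t ht
  obtain ⟨ht1, ht2⟩ := ht
  unfold artanh
  rw [Real.log_div (by linarith) (by linarith)]

lemma arctan_pos' {x : ℝ} (hx : 0 < x) : 0 < Real.arctan x := by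
  have := Real.arctan_strictMono hx
  rwa [Real.arctan_zero] at this

lemma arctan_lt_self {x : ℝ} (hx : 0 < x) : Real.arctan x < x := by
  have h1 : 0 < Real.arctan x := arctan_pos' hx
  have h2 : Real.arctan x < Real.pi / 2 := Real.arctan_lt_pi_div_two x
  have := Real.lt_tan h1 h2
  rwa [Real.tan_arctan] at this

lemma self_div_lt_arctan {x : ℝ} (hx : 0 < x) : x / (1 + x ^ 2) < Real.arctan x := by
  have ht : 0 < Real.arctan x := arctan_pos' hx
  have hs := Real.sin_lt (by linarith : 0 < 2 * Real.arctan x)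
  rw [Real.sin_two_mul, Real.sin_arctan, Real.cos_arctan] at hs
  have hq : (0:ℝ) < 1 + x ^ 2 := by positivity
  have hsq : Real.sqrt (1 + x ^ 2) * Real.sqrt (1 + x ^ 2) = 1 + x ^ 2 :=
    Real.mul_self_sqrt hq.le
  have key : x / Real.sqrt (1 + x ^ 2) * (1 / Real.sqrt (1 + x ^ 2)) = x / (1 + x ^ 2) := by
    rw [div_mul_div_comm, hsq]
    ring
  rw [mul_assoc, key] at hs
  linarith

lemma artanh_zero : artanh 0 = 0 := by simp [artanh]

lemma self_lt_artanh {x : ℝ} (hx : 0 < x) (hx1 : x < 1) : x < artanh x := by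
  have hmono : StrictMonoOn (fun t => artanh t - t) (Set.Ico (0:ℝ) 1) := by
    apply strictMonoOn_of_deriv_pos (convex_Ico 0 1)
    · intro t ht
      exact ((hasDerivAt_artanh (by linarith [ht.1]) ht.2).sub
        (hasDerivAt_id' t)).continuousAt.continuousWithinAt
    · intro t ht
      rw [interior_Ico] at ht
      have h1 : (0:ℝ) < 1 - t ^ 2 := by nlinarith [ht.1, ht.2]
      rw [HasDerivAt.deriv (f := fun t => artanh t - t)
        ((hasDerivAt_artanh (by linarith [ht.1]) ht.2).sub (hasDerivAt_id' t))]
      rw [lt_sub_iff_add_lt, zero_add, lt_div_iff₀ h1]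
      nlinarith [ht.1]
  have := hmono (Set.mem_Ico.mpr ⟨le_refl 0, one_pos⟩) (Set.mem_Ico.mpr ⟨hx.le, hx1⟩) hx
  simp only [artanh_zero] at this
  linarith

lemma artanh_lt {x : ℝ} (hx : 0 < x) (hx1 : x < 1) : artanh x < x / (1 - x ^ 2) := by
  have hmono : StrictMonoOn (fun t => t / (1 - t ^ 2) - artanh t) (Set.Ico (0:ℝ) 1) := by
    apply strictMonoOn_of_deriv_pos (convex_Ico 0 1)
    · intro t ht
      have h1 : (0:ℝ) < 1 - t ^ 2 := by nlinarith [ht.1, ht.2]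
      exact (((hasDerivAt_id' t).div (((hasDerivAt_pow 2 t).const_sub 1)) h1.ne').sub
        (hasDerivAt_artanh (by linarith [ht.1]) ht.2)).continuousAt.continuousWithinAt
    · intro t ht
      rw [interior_Ico] at ht
      have h1 : (0:ℝ) < 1 - t ^ 2 := by nlinarith [ht.1, ht.2]
      rw [HasDerivAt.deriv (f := fun t => t / (1 - t ^ 2) - artanh t)
        (((hasDerivAt_id' t).div (((hasDerivAt_pow 2 t).const_sub 1)) h1.ne').sub
        (hasDerivAt_artanh (by linarith [ht.1]) ht.2))]
      rw [sub_pos]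
      rw [div_lt_div_iff₀ h1 (by positivity)]
      norm_num
      nlinarith [ht.1, mul_pos (mul_pos ht.1 ht.1) h1]
  have := hmono (Set.mem_Ico.mpr ⟨le_refl 0, one_pos⟩) (Set.mem_Ico.mpr ⟨hx.le, hx1⟩) hx
  simp only [artanh_zero] at this
  norm_num at this
  linarith

lemma arctan_div_strictAnti : StrictAntiOn (fun x => Real.arctan x / x) (Set.Ioi (0:ℝ)) := by
  apply strictAntiOn_of_deriv_neg (convex_Ioi 0)
  · intro t ht
    exact ((Real.hasDerivAt_arctan t).div (hasDerivAt_id' t)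
      (ne_of_gt ht)).continuousAt.continuousWithinAt
  · intro t ht
    rw [interior_Ioi] at ht
    rw [HasDerivAt.deriv (f := fun x => Real.arctan x / x)
      ((Real.hasDerivAt_arctan t).div (hasDerivAt_id' t) (ne_of_gt ht))]
    apply div_neg_of_neg_of_pos _ (pow_pos (Set.mem_Ioi.mp ht) 2)
    have := self_div_lt_arctan ht
    have h2 : 1 / (1 + t ^ 2) * t = t / (1 + t ^ 2) := by ring
    rw [h2]
    nlinarith [arctan_pos' ht]

lemma artanh_div_strictMono : StrictMonoOn (fun x => artanh x / x) (Set.Ioo (0:ℝ) 1) := by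
  apply strictMonoOn_of_deriv_pos (convex_Ioo 0 1)
  · intro t ht
    exact ((hasDerivAt_artanh (by linarith [ht.1]) ht.2).div (hasDerivAt_id' t)
      (ne_of_gt ht.1)).continuousAt.continuousWithinAt
  · intro t ht
    rw [interior_Ioo] at ht
    have h1 : (0:ℝ) < 1 - t ^ 2 := by nlinarith [ht.1, ht.2]
    rw [HasDerivAt.deriv (f := fun x => artanh x / x)
      ((hasDerivAt_artanh (by linarith [ht.1]) ht.2).div (hasDerivAt_id' t)
      (ne_of_gt ht.1))]
    apply div_pos _ (pow_pos ht.1 2)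
    have := artanh_lt ht.1 ht.2
    have h2 : 1 / (1 - t ^ 2) * t = t / (1 - t ^ 2) := by ring
    rw [h2]
    nlinarith [self_lt_artanh ht.1 ht.2, ht.1]


/-- The generalized arctangent: `arctan(λ,y) = arctan(√λ y)/√λ` for `λ > 0`, `y` for
`λ = 0`, and `arctanh(√(-λ) y)/√(-λ)` for `λ < 0` (requiring `√(-λ)|y| < 1`). -/
noncomputable def arctanGen (lam y : ℝ) : ℝ :=
  if 0 < lam then Real.arctan (Real.sqrt lam * y) / Real.sqrt lam
  else if lam < 0 then artanh (Real.sqrt (-lam) * y) / Real.sqrt (-lam)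
  else y

lemma arctanGen_of_pos {lam : ℝ} (h : 0 < lam) (y : ℝ) :
    arctanGen lam y = Real.arctan (Real.sqrt lam * y) / Real.sqrt lam := if_pos h

lemma arctanGen_of_neg {lam : ℝ} (h : lam < 0) (y : ℝ) :
    arctanGen lam y = artanh (Real.sqrt (-lam) * y) / Real.sqrt (-lam) := by
  rw [arctanGen, if_neg (not_lt.mpr h.le), if_pos h]

lemma arctanGen_zero (y : ℝ) : arctanGen 0 y = y := by simp [arctanGen]

lemma arctanGen_scaled_pos {lam y : ℝ} (h : 0 < lam) (hy : 0 < y) :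
    arctanGen lam y = y * (Real.arctan (Real.sqrt lam * y) / (Real.sqrt lam * y)) := by
  have hs : 0 < Real.sqrt lam := Real.sqrt_pos.mpr h
  rw [arctanGen_of_pos h]
  field_simp

lemma arctanGen_scaled_neg {lam y : ℝ} (h : lam < 0) (hy : 0 < y) :
    arctanGen lam y = y * (artanh (Real.sqrt (-lam) * y) / (Real.sqrt (-lam) * y)) := by
  have hs : 0 < Real.sqrt (-lam) := Real.sqrt_pos.mpr (by linarith)
  rw [arctanGen_of_neg h]
  field_simp

lemma arctanGen_lt_of_pos {lam y : ℝ} (h : 0 < lam) (hy : 0 < y) : arctanGen lam y < y := by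
  have hs : 0 < Real.sqrt lam := Real.sqrt_pos.mpr h
  have hu : 0 < Real.sqrt lam * y := mul_pos hs hy
  rw [arctanGen_of_pos h, div_lt_iff₀ hs]
  calc Real.arctan (Real.sqrt lam * y) < Real.sqrt lam * y := arctan_lt_self hu
    _ = y * Real.sqrt lam := by ring

lemma lt_arctanGen_of_neg {lam y : ℝ} (h : lam < 0) (hy : 0 < y)
    (h1 : Real.sqrt (-lam) * y < 1) : y < arctanGen lam y := by
  have hs : 0 < Real.sqrt (-lam) := Real.sqrt_pos.mpr (by linarith)
  have hu : 0 < Real.sqrt (-lam) * y := mul_pos hs hy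
  rw [arctanGen_of_neg h, lt_div_iff₀ hs]
  calc y * Real.sqrt (-lam) = Real.sqrt (-lam) * y := by ring
    _ < artanh (Real.sqrt (-lam) * y) := self_lt_artanh hu h1

lemma arctanGen_pos_of_pos {lam y : ℝ} (h : 0 < lam) (hy : 0 < y) : 0 < arctanGen lam y := by
  have hs : 0 < Real.sqrt lam := Real.sqrt_pos.mpr h
  rw [arctanGen_of_pos h]
  exact div_pos (arctan_pos' (mul_pos hs hy)) hs

lemma arctanGen_mono_pos {a b y : ℝ} (ha : 0 < a) (hab : a < b) (hy : 0 < y) :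
    arctanGen b y < arctanGen a y := by
  have hb : 0 < b := ha.trans hab
  have hsa : 0 < Real.sqrt a := Real.sqrt_pos.mpr ha
  have hsb : 0 < Real.sqrt b := Real.sqrt_pos.mpr hb
  have hss : Real.sqrt a < Real.sqrt b := Real.sqrt_lt_sqrt ha.le hab
  have hu : 0 < Real.sqrt a * y := mul_pos hsa hy
  have hv : 0 < Real.sqrt b * y := mul_pos hsb hy
  have huv : Real.sqrt a * y < Real.sqrt b * y := by
    exact mul_lt_mul_of_pos_right hss hy
  have := arctan_div_strictAnti (Set.mem_Ioi.mpr hu) (Set.mem_Ioi.mpr hv) huv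
  rw [arctanGen_scaled_pos ha hy, arctanGen_scaled_pos hb hy]
  exact mul_lt_mul_of_pos_left this hy

lemma arctanGen_mono_neg {a b y : ℝ} (hb : b < 0) (hab : a < b) (hy : 0 < y)
    (h1a : Real.sqrt (-a) * y < 1) : arctanGen b y < arctanGen a y := by
  have ha : a < 0 := hab.trans hb
  have hsa : 0 < Real.sqrt (-a) := Real.sqrt_pos.mpr (by linarith)
  have hsb : 0 < Real.sqrt (-b) := Real.sqrt_pos.mpr (by linarith)
  have hss : Real.sqrt (-b) < Real.sqrt (-a) := Real.sqrt_lt_sqrt (by linarith) (by linarith)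
  have hu : 0 < Real.sqrt (-b) * y := mul_pos hsb hy
  have hv : 0 < Real.sqrt (-a) * y := mul_pos hsa hy
  have huv : Real.sqrt (-b) * y < Real.sqrt (-a) * y := mul_lt_mul_of_pos_right hss hy
  have := artanh_div_strictMono (Set.mem_Ioo.mpr ⟨hu, huv.trans h1a⟩)
    (Set.mem_Ioo.mpr ⟨hv, h1a⟩) huv
  rw [arctanGen_scaled_neg ha hy, arctanGen_scaled_neg hb hy]
  exact mul_lt_mul_of_pos_left this hy


/-- For fixed `y > 0`, the function `λ ↦ arctan(λ, y)` is strictly decreasing on the set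
where it is defined (i.e. where `√(-λ)·y < 1` when `λ < 0`); consequently
`|arctan(Ω, y)| > |y|` when `Ω < 0` and `|arctan(Ω, y)| < |y|` when `Ω > 0`. -/
theorem stmt10 (y : ℝ) (hy : 0 < y) :
    StrictAntiOn (fun lam => arctanGen lam y) {lam : ℝ | lam < 0 → Real.sqrt (-lam) * y < 1} ∧
    (∀ lam : ℝ, lam < 0 → Real.sqrt (-lam) * y < 1 → |y| < |arctanGen lam y|) ∧
    (∀ lam : ℝ, 0 < lam → |arctanGen lam y| < |y|) := by
  refine ⟨?_, ?_, ?_⟩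
  · intro a ha b hb hab
    simp only [Set.mem_setOf_eq] at ha hb
    rcases lt_trichotomy b 0 with hb0 | hb0 | hb0
    · exact arctanGen_mono_neg hb0 hab hy (ha (hab.trans hb0))
    · subst hb0
      simp only [arctanGen_zero]
      exact lt_arctanGen_of_neg hab hy (ha hab)
    · rcases lt_trichotomy a 0 with ha0 | ha0 | ha0
      · calc arctanGen b y < y := arctanGen_lt_of_pos hb0 hy
          _ < arctanGen a y := lt_arctanGen_of_neg ha0 hy (ha ha0)
      · subst ha0
        simp only [arctanGen_zero]
        exact arctanGen_lt_of_pos hb0 hy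
      · exact arctanGen_mono_pos ha0 hab hy
  · intro lam h h1
    have := lt_arctanGen_of_neg h hy h1
    rw [abs_of_pos hy, abs_of_pos (hy.trans this)]
    exact this
  · intro lam h
    have := arctanGen_lt_of_pos h hy
    rw [abs_of_pos hy, abs_of_pos (arctanGen_pos_of_pos h hy)]
    exact this
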